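/- Let L be an unbounded selfadjoint operator with ker L = {0} and G a bounded selfadjoint operator with ker G = {0} and ran G ∩ dom L = {0}. Then the operator A defined by Au = L(I + iG)Lu on dom A = {u ∈ dom L : (I + iG)Lu ∈ dom L} satisfies dom A ∩ dom A* = {0}, where A* u = L(I − iG)Lu on dom A* = {u ∈ dom L : (I − iG)Lu ∈ dom L}. -/
import Mathlib


open scoped ComplexInnerProductSpace

/-- Let `L` be an unbounded selfadjoint operator with `ker L = {0}` and `G` a
bounded selfadjoint operator with `ker G = {0}` and `ran G ∩ dom L = {0}`.  Then the m-sectorial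
operator `A = L(I + iG)L`, with `dom A = {u ∈ dom L : (I + iG)Lu ∈ dom L}` and adjoint
`A* = L(I − iG)L` on `dom A* = {u ∈ dom L : (I − iG)Lu ∈ dom L}`, satisfies
`dom A ∩ dom A* = {0}`. -/
theorem domain_intersection_trivial_LGL
    {E : Type*} [NormedAddCommGroup E] [InnerProductSpace ℂ E] [CompleteSpace E]
    (L : E →ₗ.[ℂ] E) (hsa : IsSelfAdjoint L)
    (hunb : ¬ ∃ C : ℝ, ∀ u : L.domain, ‖L u‖ ≤ C * ‖(u : E)‖)
    (hker : ∀ u : L.domain, L u = 0 → (u : E) = 0)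
    (G : E →L[ℂ] E) (hG : IsSelfAdjoint G)
    (hGker : ∀ x : E, G x = 0 → x = 0)
    (hGL : ∀ x : E, G x ∈ L.domain → G x = 0) :
    {u : E | ∃ hu : u ∈ L.domain, L ⟨u, hu⟩ + Complex.I • G (L ⟨u, hu⟩) ∈ L.domain} ∩
      {u : E | ∃ hu : u ∈ L.domain, L ⟨u, hu⟩ - Complex.I • G (L ⟨u, hu⟩) ∈ L.domain}
      = {0} := by
  ext u
  simp only [Set.mem_inter_iff, Set.mem_setOf_eq, Set.mem_singleton_iff]
  constructor
  · rintro ⟨⟨hu, h1⟩, ⟨hu', h2⟩⟩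
    have h2' : L ⟨u, hu⟩ - Complex.I • G (L ⟨u, hu⟩) ∈ L.domain := h2
    have hsub : (L ⟨u, hu⟩ + Complex.I • G (L ⟨u, hu⟩)) -
        (L ⟨u, hu⟩ - Complex.I • G (L ⟨u, hu⟩)) ∈ L.domain := L.domain.sub_mem h1 h2'
    have h2i : ((2 : ℂ) * Complex.I) • G (L ⟨u, hu⟩) ∈ L.domain := by
      have : (L ⟨u, hu⟩ + Complex.I • G (L ⟨u, hu⟩)) -
          (L ⟨u, hu⟩ - Complex.I • G (L ⟨u, hu⟩)) = ((2 : ℂ) * Complex.I) • G (L ⟨u, hu⟩) := by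
        rw [two_mul, add_smul]; abel
      rwa [this] at hsub
    have hmem : G (L ⟨u, hu⟩) ∈ L.domain := by
      have := L.domain.smul_mem (((2 : ℂ) * Complex.I)⁻¹) h2i
      rwa [smul_smul, inv_mul_cancel₀ (by simp [Complex.I_ne_zero]), one_smul] at this
    have hGz := hGL _ hmem
    have hLz : L ⟨u, hu⟩ = 0 := hGker _ hGz
    exact hker ⟨u, hu⟩ hLz
  · rintro rfl
    have h0 : (0 : E) ∈ L.domain := L.domain.zero_mem
    have hL0 : L ⟨0, h0⟩ = 0 := by
      have : (⟨0, h0⟩ : L.domain) = 0 := rfl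
      rw [this]; exact L.map_zero
    refine ⟨⟨h0, ?_⟩, ⟨h0, ?_⟩⟩ <;> simp [hL0]
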